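/- Let 𝒞 be a finitely complete category, I : 𝒞 ⥤ 𝒞 a functor preserving finite limits, η : 𝟭_𝒞 ⟶ I a natural transformation, and V a group object in 𝒞, with D_e the pullback of η_V ∘ e : ⊤ → I V along η_V : V → I V (the formal disk at the unit of V). Suppose X is a 'V-manifold': there are morphisms a : U → V and b : U → X which are both formally étale (their η-naturality squares are pullbacks), with b an epimorphism. Then, writing T^∞X for the pullback of η_X along itself with first projection π : T^∞X → X, there is a pullback square exhibiting U × D_e as the pullback of π : T^∞X → X along b : U → X, with left leg the projection pr₁ : U × D_e → U; in particular T^∞X is a locally trivial D_e-fiber bundle over X. -/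

import Mathlib

open CategoryTheory CategoryTheory.Limits

section Aux

attribute [local simp] prod.lift_fst prod.lift_snd prod.lift_fst_assoc prod.lift_snd_assoc
  pullback.lift_fst pullback.lift_snd pullback.lift_fst_assoc pullback.lift_snd_assoc

variable {C : Type*} [Category C] [HasFiniteLimits C]

/-- The first-projection square of a product map is a pullback. -/
lemma aux_prodMap_fst_isPullback {U V D : C} (a : U ⟶ V) :
    IsPullback (prod.map a (𝟙 D)) (prod.fst : U ⨯ D ⟶ U) (prod.fst : V ⨯ D ⟶ V) a := by
  refine IsPullback.of_isLimit' ⟨by simp⟩ ?_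
  refine PullbackCone.IsLimit.mk _ (fun s => prod.lift s.snd (s.fst ≫ prod.snd)) ?_ ?_ ?_
  · intro s
    apply Limits.prod.hom_ext
    · simpa using s.condition.symm
    · simp
  · intro s; simp
  · intro s mlift h1 h2
    apply Limits.prod.hom_ext
    · simpa using h2
    · have := h1 =≫ (prod.snd : V ⨯ D ⟶ D)
      simpa using this

/-- If `η` is natural and `I` preserves binary products, then postcomposition with
`m ≫ η.app V` only depends on the `η`-images of the components of a pair. -/
lemma aux_key {V : C} (I : C ⥤ C) [PreservesFiniteLimits I] (η : 𝟭 C ⟶ I)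
    (m : V ⨯ V ⟶ V) {W : C} (f g g' : W ⟶ V) (h : g ≫ η.app V = g' ≫ η.app V) :
    (prod.lift f g ≫ m) ≫ η.app V = (prod.lift f g' ≫ m) ≫ η.app V := by
  rw [Category.assoc, Category.assoc]
  have nat : m ≫ η.app V = η.app (V ⨯ V) ≫ I.map m := by
    simpa using η.naturality m
  rw [nat, ← Category.assoc, ← Category.assoc]
  have key : prod.lift f g ≫ η.app (V ⨯ V) = prod.lift f g' ≫ η.app (V ⨯ V) := by
    rw [← cancel_mono (prodComparison I V V)]
    apply Limits.prod.hom_ext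
    · have n1 : η.app (V ⨯ V) ≫ I.map prod.fst = prod.fst ≫ η.app V := by
        simpa using (η.naturality (prod.fst : V ⨯ V ⟶ V)).symm
      simp only [Category.assoc, prodComparison_fst, n1]
      simp
    · have n2 : η.app (V ⨯ V) ≫ I.map prod.snd = prod.snd ≫ η.app V := by
        simpa using (η.naturality (prod.snd : V ⨯ V ⟶ V)).symm
      simp only [Category.assoc, prodComparison_snd, n2]
      simp only [← Category.assoc]
      simp [h]
  rw [key]

variable {V : C} (m : V ⨯ V ⟶ V) (e : ⊤_ C ⟶ V) (ι : V ⟶ V)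

lemma aux_gen_unit_left (unit_left : prod.lift (terminal.from V ≫ e) (𝟙 V) ≫ m = 𝟙 V)
    {W : C} (f : W ⟶ V) : prod.lift (terminal.from W ≫ e) f ≫ m = f := by
  have : f ≫ prod.lift (terminal.from V ≫ e) (𝟙 V) ≫ m = f ≫ 𝟙 V := by rw [unit_left]
  simpa [prod.comp_lift, ← Category.assoc, terminal.comp_from] using this

lemma aux_gen_unit_right (unit_right : prod.lift (𝟙 V) (terminal.from V ≫ e) ≫ m = 𝟙 V)
    {W : C} (f : W ⟶ V) : prod.lift f (terminal.from W ≫ e) ≫ m = f := by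
  have : f ≫ prod.lift (𝟙 V) (terminal.from V ≫ e) ≫ m = f ≫ 𝟙 V := by rw [unit_right]
  simpa [prod.comp_lift, ← Category.assoc, terminal.comp_from] using this

lemma aux_gen_inv_left (inv_left : prod.lift ι (𝟙 V) ≫ m = terminal.from V ≫ e)
    {W : C} (f : W ⟶ V) : prod.lift (f ≫ ι) f ≫ m = terminal.from W ≫ e := by
  have : f ≫ prod.lift ι (𝟙 V) ≫ m = f ≫ terminal.from V ≫ e := by rw [inv_left]
  simpa [prod.comp_lift, ← Category.assoc, terminal.comp_from] using this

lemma aux_gen_inv_right (inv_right : prod.lift (𝟙 V) ι ≫ m = terminal.from V ≫ e)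
    {W : C} (f : W ⟶ V) : prod.lift f (f ≫ ι) ≫ m = terminal.from W ≫ e := by
  have : f ≫ prod.lift (𝟙 V) ι ≫ m = f ≫ terminal.from V ≫ e := by rw [inv_right]
  simpa [prod.comp_lift, ← Category.assoc, terminal.comp_from] using this

lemma aux_gen_assoc
    (assoc : prod.map m (𝟙 V) ≫ m = (prod.associator V V V).hom ≫ prod.map (𝟙 V) m ≫ m)
    {W : C} (f g h : W ⟶ V) :
    prod.lift (prod.lift f g ≫ m) h ≫ m = prod.lift f (prod.lift g h ≫ m) ≫ m := by
  have e1 : prod.lift (prod.lift f g ≫ m) h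
      = prod.lift (prod.lift f g) h ≫ prod.map m (𝟙 V) := by
    apply Limits.prod.hom_ext <;> simp
  have e2 : prod.lift (prod.lift f g) h ≫ (prod.associator V V V).hom
      = prod.lift f (prod.lift g h) := by
    apply Limits.prod.hom_ext
    · simp [Limits.prod.associator]
    · apply Limits.prod.hom_ext <;> simp [Limits.prod.associator]
  calc prod.lift (prod.lift f g ≫ m) h ≫ m
      = prod.lift (prod.lift f g) h ≫ prod.map m (𝟙 V) ≫ m := by
        rw [e1, Category.assoc]
    _ = prod.lift (prod.lift f g) h ≫ (prod.associator V V V).hom ≫ prod.map (𝟙 V) m ≫ m := by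
        rw [assoc]
    _ = prod.lift f (prod.lift g h) ≫ prod.map (𝟙 V) m ≫ m := by
        rw [← Category.assoc, e2]
    _ = prod.lift f (prod.lift g h ≫ m) ≫ m := by
        rw [← Category.assoc]
        congr 1
        apply Limits.prod.hom_ext <;> simp

/-- Trivialization of the formal disk bundle of a group object: there is a morphism
`V ⨯ 𝔻ₑ ⟶ T^∞V` fitting in a pullback square over `𝟙 V`. -/
lemma aux_triv (I : C ⥤ C) [PreservesFiniteLimits I] (η : 𝟭 C ⟶ I)
    (assoc : prod.map m (𝟙 V) ≫ m = (prod.associator V V V).hom ≫ prod.map (𝟙 V) m ≫ m)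
    (unit_left : prod.lift (terminal.from V ≫ e) (𝟙 V) ≫ m = 𝟙 V)
    (unit_right : prod.lift (𝟙 V) (terminal.from V ≫ e) ≫ m = 𝟙 V)
    (inv_left : prod.lift ι (𝟙 V) ≫ m = terminal.from V ≫ e)
    (inv_right : prod.lift (𝟙 V) ι ≫ m = terminal.from V ≫ e) :
    ∃ w : V ⨯ pullback (η.app V) (e ≫ η.app V) ⟶ pullback (η.app V) (η.app V),
      IsPullback w prod.fst (pullback.fst (η.app V) (η.app V)) (𝟙 V) := by
  have hD : pullback.fst (η.app V) (e ≫ η.app V) ≫ η.app V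
      = terminal.from (pullback (η.app V) (e ≫ η.app V)) ≫ e ≫ η.app V := by
    rw [pullback.condition]
    congr 1
    exact terminal.hom_ext _ _
  have ht : (prod.snd : V ⨯ pullback (η.app V) (e ≫ η.app V) ⟶ _) ≫ terminal.from _
      = terminal.from _ := terminal.hom_ext _ _
  have hτc : (prod.fst : V ⨯ pullback (η.app V) (e ≫ η.app V) ⟶ V) ≫ η.app V
      = (prod.lift prod.fst (prod.snd ≫ pullback.fst (η.app V) (e ≫ η.app V)) ≫ m)
          ≫ η.app V := by
    have h1 : (prod.snd ≫ pullback.fst (η.app V) (e ≫ η.app V)) ≫ η.app V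
        = (terminal.from (V ⨯ pullback (η.app V) (e ≫ η.app V)) ≫ e) ≫ η.app V := by
      rw [Category.assoc, hD, ← Category.assoc, ht, Category.assoc]
    have h2 := aux_key I η m (prod.fst : V ⨯ pullback (η.app V) (e ≫ η.app V) ⟶ V)
      (prod.snd ≫ pullback.fst (η.app V) (e ≫ η.app V))
      (terminal.from (V ⨯ pullback (η.app V) (e ≫ η.app V)) ≫ e) h1
    have h3 : (prod.lift (prod.fst : V ⨯ pullback (η.app V) (e ≫ η.app V) ⟶ V)
          (terminal.from (V ⨯ pullback (η.app V) (e ≫ η.app V)) ≫ e) ≫ m) ≫ η.app V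
        = prod.fst ≫ η.app V := by
      rw [aux_gen_unit_right m e unit_right]; rfl
    exact (h2.trans h3).symm
  refine ⟨pullback.lift prod.fst
    (prod.lift prod.fst (prod.snd ≫ pullback.fst (η.app V) (e ≫ η.app V)) ≫ m) hτc, ?_⟩
  have hσc : (prod.lift (pullback.fst (η.app V) (η.app V) ≫ ι)
        (pullback.snd (η.app V) (η.app V)) ≫ m) ≫ η.app V
      = terminal.from (pullback (η.app V) (η.app V)) ≫ e ≫ η.app V := by
    have h2 := aux_key I η m (pullback.fst (η.app V) (η.app V) ≫ ι)
      (pullback.snd (η.app V) (η.app V)) (pullback.fst (η.app V) (η.app V))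
      pullback.condition.symm
    have h3 : (prod.lift (pullback.fst (η.app V) (η.app V) ≫ ι)
          (pullback.fst (η.app V) (η.app V)) ≫ m) ≫ η.app V
        = terminal.from (pullback (η.app V) (η.app V)) ≫ e ≫ η.app V := by
      rw [aux_gen_inv_left m e ι inv_left, Category.assoc]
    exact h2.trans h3
  haveI : IsIso (pullback.lift prod.fst
      (prod.lift prod.fst (prod.snd ≫ pullback.fst (η.app V) (e ≫ η.app V)) ≫ m) hτc) := by
    refine ⟨prod.lift (pullback.fst (η.app V) (η.app V))
      (pullback.lift (prod.lift (pullback.fst (η.app V) (η.app V) ≫ ι)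
        (pullback.snd (η.app V) (η.app V)) ≫ m) (terminal.from _) hσc), ?_, ?_⟩
    · apply Limits.prod.hom_ext
      · simp
      · apply pullback.hom_ext
        · simp only [Category.assoc, prod.lift_snd, pullback.lift_fst, Category.id_comp]
          rw [← Category.assoc, prod.comp_lift]
          simp only [Category.assoc, pullback.lift_fst, pullback.lift_fst_assoc,
            pullback.lift_snd, pullback.lift_snd_assoc]
          rw [← aux_gen_assoc m assoc, aux_gen_inv_left m e ι inv_left,
            aux_gen_unit_left m e unit_left]
        · exact terminal.hom_ext _ _
    · apply pullback.hom_ext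
      · simp
      · simp only [Category.assoc, pullback.lift_snd, Category.id_comp]
        rw [← Category.assoc, prod.comp_lift]
        simp only [prod.lift_fst, Category.assoc]
        rw [← Category.assoc (prod.lift _ _), prod.lift_snd, pullback.lift_fst,
          ← aux_gen_assoc m assoc, aux_gen_inv_right m e ι inv_right,
          aux_gen_unit_left m e unit_left]
  exact IsPullback.of_horiz_isIso ⟨by simp⟩

end Aux

attribute [local simp] pullback.lift_fst pullback.lift_snd

/-- If `X` is a `V`-manifold, i.e. there are formally étale morphisms
`a : U ⟶ V` and `b : U ⟶ X` with `b` epi, where `V` is a group object, then the formal disk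
bundle `T^∞X` (pullback of `η_X` along itself, with first projection `π`) becomes trivial
when pulled back along `b`: there is a pullback square with corners `U ⨯ 𝔻ₑ`, `U`, `T^∞X`,
`X`, whose left leg is `pr₁` and bottom leg is `b`. -/
theorem statement4 {C : Type*} [Category C] [HasFiniteLimits C]
    (I : C ⥤ C) [PreservesFiniteLimits I] (η : 𝟭 C ⟶ I)
    (V : C) (m : V ⨯ V ⟶ V) (e : ⊤_ C ⟶ V) (ι : V ⟶ V)
    (assoc : prod.map m (𝟙 V) ≫ m = (prod.associator V V V).hom ≫ prod.map (𝟙 V) m ≫ m)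
    (unit_left : prod.lift (terminal.from V ≫ e) (𝟙 V) ≫ m = 𝟙 V)
    (unit_right : prod.lift (𝟙 V) (terminal.from V ≫ e) ≫ m = 𝟙 V)
    (inv_left : prod.lift ι (𝟙 V) ≫ m = terminal.from V ≫ e)
    (inv_right : prod.lift (𝟙 V) ι ≫ m = terminal.from V ≫ e)
    {X U : C} (a : U ⟶ V) (b : U ⟶ X)
    (ha : IsPullback (η.app U) a (I.map a) (η.app V))
    (hb : IsPullback (η.app U) b (I.map b) (η.app X))
    [Epi b] :
    ∃ t : U ⨯ pullback (η.app V) (e ≫ η.app V) ⟶ pullback (η.app X) (η.app X),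
      IsPullback t prod.fst (pullback.fst (η.app X) (η.app X)) b := by
  obtain ⟨w, F⟩ := aux_triv m e ι I η assoc unit_left unit_right inv_left inv_right
  have E := aux_prodMap_fst_isPullback (D := pullback (η.app V) (e ≫ η.app V)) a
  have E' : IsPullback (prod.map a (𝟙 (pullback (η.app V) (e ≫ η.app V))) ≫ w)
      (prod.fst : U ⨯ pullback (η.app V) (e ≫ η.app V) ⟶ U)
      (pullback.fst (η.app V) (η.app V)) a := by
    simpa using E.paste_horiz F
  -- for an étale map c : U ⟶ Y, the induced square between formal disk bundles is a pullback
  have main : ∀ {Y : C} (c : U ⟶ Y) (_ : IsPullback (η.app U) c (I.map c) (η.app Y)),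
      IsPullback
        (pullback.map (η.app U) (η.app U) (η.app Y) (η.app Y) c c (I.map c)
          (by simpa using (η.naturality c).symm) (by simpa using (η.naturality c).symm))
        (pullback.fst (η.app U) (η.app U)) (pullback.fst (η.app Y) (η.app Y)) c := by
    intro Y c hc
    have sq2 : IsPullback (pullback.snd (η.app Y) (η.app Y))
        (pullback.fst (η.app Y) (η.app Y)) (η.app Y) (η.app Y) :=
      (IsPullback.of_hasPullback (η.app Y) (η.app Y)).flip
    have outer0 : IsPullback (pullback.snd (η.app U) (η.app U) ≫ c)
        (pullback.fst (η.app U) (η.app U)) (η.app Y) (η.app U ≫ I.map c) :=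
      ((IsPullback.of_hasPullback (η.app U) (η.app U)).flip).paste_horiz hc.flip
    have e1 : pullback.map (η.app U) (η.app U) (η.app Y) (η.app Y) c c (I.map c)
          (by simpa using (η.naturality c).symm) (by simpa using (η.naturality c).symm)
        ≫ pullback.snd (η.app Y) (η.app Y) = pullback.snd (η.app U) (η.app U) ≫ c := by
      simp
    have e2 : η.app U ≫ I.map c = c ≫ η.app Y := by
      simpa using (η.naturality c).symm
    have outer1 : IsPullback
        ((pullback.map (η.app U) (η.app U) (η.app Y) (η.app Y) c c (I.map c)
            (by simpa using (η.naturality c).symm) (by simpa using (η.naturality c).symm))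
          ≫ pullback.snd (η.app Y) (η.app Y))
        (pullback.fst (η.app U) (η.app U)) (η.app Y) (c ≫ η.app Y) := by
      rw [e1, ← e2]
      exact outer0
    exact IsPullback.of_right outer1 (by simp) sq2
  have mainA := main a ha
  have mainB := main b hb
  -- the comparison isomorphism `U ⨯ 𝔻ₑ ≅ T^∞U` over `U`
  let χ : (U ⨯ pullback (η.app V) (e ≫ η.app V)) ≅ pullback (η.app U) (η.app U) :=
    E'.isoPullback ≪≫ mainA.isoPullback.symm
  have hχ : χ.hom ≫ pullback.fst (η.app U) (η.app U)
      = (prod.fst : U ⨯ pullback (η.app V) (e ≫ η.app V) ⟶ U) := by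
    have h1 : mainA.isoPullback.inv ≫ pullback.fst (η.app U) (η.app U)
        = pullback.snd (pullback.fst (η.app V) (η.app V)) a := mainA.isoPullback_inv_snd
    simp only [χ, Iso.trans_hom, Iso.symm_hom, Category.assoc, h1]
    exact E'.isoPullback_hom_snd
  have isoSq : IsPullback χ.hom (prod.fst : U ⨯ pullback (η.app V) (e ≫ η.app V) ⟶ U)
      (pullback.fst (η.app U) (η.app U)) (𝟙 U) :=
    IsPullback.of_horiz_isIso ⟨by simpa using hχ⟩
  have final := isoSq.paste_horiz mainB
  rw [Category.id_comp] at final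
  exact ⟨_, final⟩
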